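/- Let R : ℝ → (p×p real symmetric matrices) be differentiable at 0 with R(0) = λ₁ γ₁ γ₁ᵀ, where λ₁ ≠ 0 and γ₁ ∈ ℝ^p is a unit vector. Suppose γ : ℝ → ℝ^p and λ : ℝ → ℝ are differentiable at 0 with γ(0) = γ₁, λ(0) = λ₁, and for all ε in a neighborhood of 0, ‖γ(ε)‖ = 1 and R(ε) γ(ε) = λ(ε) γ(ε). Then γ′(0) = (1/λ₁) (I_p − γ₁ γ₁ᵀ) R′(0) γ₁. -/

import Mathlib

open Matrix

/-- first-order eigenvector perturbation identity for a rank-one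
symmetric matrix family: `γ′(0) = (1/λ₁)(I − γ₁γ₁ᵀ) R′(0) γ₁`. -/
theorem stmt_10 {p : ℕ} (R : ℝ → Matrix (Fin p) (Fin p) ℝ)
    (R' : Matrix (Fin p) (Fin p) ℝ)
    (hsymm : ∀ ε, (R ε).IsSymm)
    (hR' : ∀ i j, HasDerivAt (fun ε => R ε i j) (R' i j) 0)
    (lam₁ : ℝ) (hlam₁ : lam₁ ≠ 0)
    (γ₁ : Fin p → ℝ) (hγ₁ : ∑ i, γ₁ i ^ 2 = 1)
    (hR0 : R 0 = lam₁ • vecMulVec γ₁ γ₁)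
    (γ : ℝ → Fin p → ℝ) (γ' : Fin p → ℝ) (hγ : HasDerivAt γ γ' 0) (hγ0 : γ 0 = γ₁)
    (lam : ℝ → ℝ) (lam' : ℝ) (hlam : HasDerivAt lam lam' 0) (hlam0 : lam 0 = lam₁)
    (heig : ∀ᶠ ε in nhds (0 : ℝ), (∑ i, γ ε i ^ 2 = 1) ∧ R ε *ᵥ γ ε = lam ε • γ ε) :
    γ' = (1 / lam₁) • ((1 - vecMulVec γ₁ γ₁) *ᵥ (R' *ᵥ γ₁)) := by
  have hγi : ∀ i, HasDerivAt (fun ε => γ ε i) (γ' i) 0 := hasDerivAt_pi.1 hγ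
  -- orthogonality: ∑ γ₁ i * γ' i = 0
  have hnorm : HasDerivAt (fun ε => ∑ i, γ ε i ^ 2) (∑ i, 2 * γ₁ i * γ' i) 0 := by
    have := HasDerivAt.fun_sum (u := Finset.univ)
      (A := fun i ε => γ ε i ^ 2) (A' := fun i => 2 * γ₁ i * γ' i) (fun i _ => by
        have h := (hγi i).fun_pow 2
        simpa [hγ0, mul_comm, mul_assoc, mul_left_comm] using h)
    simpa using this
  have hconst : HasDerivAt (fun ε => ∑ i, γ ε i ^ 2) 0 0 := by
    have h1 : HasDerivAt (fun _ : ℝ => (1 : ℝ)) 0 0 := hasDerivAt_const 0 1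
    exact h1.congr_of_eventuallyEq (heig.mono fun ε h => h.1)
  have horth : ∑ i, γ₁ i * γ' i = 0 := by
    have h := hnorm.unique hconst
    have : (2 : ℝ) * ∑ i, γ₁ i * γ' i = 0 := by
      rw [Finset.mul_sum]; rw [← h]; congr 1; ext i; ring
    linarith
  -- component equations
  have key : ∀ i, ∑ j, R' i j * γ₁ j = lam' * γ₁ i + lam₁ * γ' i := by
    intro i
    have hL : HasDerivAt (fun ε => ∑ j, R ε i j * γ ε j)
        (∑ j, (R' i j * γ₁ j + R 0 i j * γ' j)) 0 := by
      exact HasDerivAt.fun_sum fun j _ => by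
        simpa [hγ0] using (hR' i j).fun_mul (hγi j)
    have hRen : HasDerivAt (fun ε => (R ε *ᵥ γ ε) i)
        (∑ j, (R' i j * γ₁ j + R 0 i j * γ' j)) 0 := by
      simpa [Matrix.mulVec, dotProduct] using hL
    have hRi : HasDerivAt (fun ε => lam ε * γ ε i) (lam' * γ₁ i + lam₁ * γ' i) 0 := by
      simpa [hγ0, hlam0] using hlam.fun_mul (hγi i)
    have hEq : (fun ε => (R ε *ᵥ γ ε) i) =ᶠ[nhds (0:ℝ)] (fun ε => lam ε * γ ε i) :=
      heig.mono fun ε h => by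
        have := congrFun h.2 i; simpa [Pi.smul_apply] using this
    have heq2 := (hRi.congr_of_eventuallyEq hEq).unique hRen
    have hR0sum : ∑ j, R 0 i j * γ' j = 0 := by
      have : ∀ j, R 0 i j = lam₁ * (γ₁ i * γ₁ j) := by
        intro j; rw [hR0]; simp [vecMulVec, mul_comm]
      calc ∑ j, R 0 i j * γ' j = lam₁ * γ₁ i * ∑ j, γ₁ j * γ' j := by
            rw [Finset.mul_sum]; congr 1; ext j; rw [this j]; ring
        _ = 0 := by rw [horth]; ring
    rw [Finset.sum_add_distrib, hR0sum, add_zero] at heq2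
    exact heq2.symm
  -- lam' = γ₁ ⬝ᵥ R' *ᵥ γ₁
  have hlam' : ∑ i, γ₁ i * ∑ j, R' i j * γ₁ j = lam' := by
    calc ∑ i, γ₁ i * ∑ j, R' i j * γ₁ j
        = ∑ i, γ₁ i * (lam' * γ₁ i + lam₁ * γ' i) := by
          congr 1; ext i; rw [key i]
      _ = lam' * ∑ i, γ₁ i ^ 2 + lam₁ * ∑ i, γ₁ i * γ' i := by
          rw [Finset.mul_sum, Finset.mul_sum, ← Finset.sum_add_distrib]
          congr 1; ext i; ring
      _ = lam' := by rw [hγ₁, horth]; ring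
  funext i
  have hRv : ∀ k, (R' *ᵥ γ₁) k = ∑ j, R' k j * γ₁ j := by
    intro k; simp [Matrix.mulVec, dotProduct]
  have hvv : (vecMulVec γ₁ γ₁ *ᵥ (R' *ᵥ γ₁)) i = γ₁ i * ∑ k, γ₁ k * (R' *ᵥ γ₁) k := by
    simp [Matrix.mulVec, dotProduct, vecMulVec, Finset.mul_sum, mul_assoc]
  have : ((1 - vecMulVec γ₁ γ₁) *ᵥ (R' *ᵥ γ₁)) i
      = (R' *ᵥ γ₁) i - γ₁ i * lam' := by
    rw [Matrix.sub_mulVec, Matrix.one_mulVec, Pi.sub_apply, hvv]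
    rw [show ∑ k, γ₁ k * (R' *ᵥ γ₁) k = lam' by
      rw [← hlam']; exact Finset.sum_congr rfl fun k _ => by rw [hRv k]]
  rw [Pi.smul_apply, this, hRv i, key i, smul_eq_mul]
  field_simp
  ring
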